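/- (Failure of regularity / LICQ for the polynomial constraint.) Let d ≥ 1, c > 0 and B ∈ ℝ^{d×d}. If Tr((I + c·B∘B)^d) = d (i.e., B is a feasible point of the acyclicity constraint), then the Fréchet derivative of the map B ↦ Tr((I + c·B∘B)^d) − d at B is the zero linear functional; in particular, no feasible point of the constraint Tr((I + c·B∘B)^d) − d = 0 is a regular point (the linear independence constraint qualification fails at every feasible point). -/
import Mathlib


open Matrix

attribute [local instance] Matrix.frobeniusNormedAddCommGroup Matrix.frobeniusNormedSpace

private lemma pow_entry_nonneg {d : ℕ} (M : Matrix (Fin d) (Fin d) ℝ)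
    (hM : ∀ i j, 0 ≤ M i j) (k : ℕ) : ∀ i j, 0 ≤ (M ^ k) i j := by
  induction k with
  | zero =>
    intro i j
    simp only [pow_zero, Matrix.one_apply]
    positivity
  | succ n ih =>
    intro i j
    rw [pow_succ, Matrix.mul_apply]
    exact Finset.sum_nonneg fun l _ => mul_nonneg (ih i l) (hM l j)

private lemma trace_ge {d : ℕ} (M : Matrix (Fin d) (Fin d) ℝ)
    (hM : ∀ i j, 0 ≤ M i j) : (d : ℝ) ≤ Matrix.trace ((1 + M) ^ d) := by
  have hcomm : Commute (1 : Matrix (Fin d) (Fin d) ℝ) M := Commute.one_left M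
  rw [hcomm.add_pow]
  rw [Matrix.trace_sum]
  have : ∀ k ∈ Finset.range (d + 1),
      (0 : ℝ) ≤ Matrix.trace ((1 : Matrix (Fin d) (Fin d) ℝ) ^ k * M ^ (d - k) * (d.choose k : Matrix (Fin d) (Fin d) ℝ)) := by
    intro k _
    rw [one_pow, one_mul]
    have : M ^ (d - k) * (d.choose k : Matrix (Fin d) (Fin d) ℝ)
        = (d.choose k : ℝ) • (M ^ (d - k)) := by
      rw [← nsmul_eq_mul', ← Nat.cast_smul_eq_nsmul ℝ]
    rw [this, Matrix.trace_smul, smul_eq_mul]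
    refine mul_nonneg (by positivity) ?_
    unfold Matrix.trace
    exact Finset.sum_nonneg fun i _ => pow_entry_nonneg M hM _ i i
  calc (d : ℝ) = Matrix.trace ((1 : Matrix (Fin d) (Fin d) ℝ) ^ d * M ^ (d - d) * (d.choose d : Matrix (Fin d) (Fin d) ℝ)) := by
        simp
    _ ≤ _ := by
        refine Finset.single_le_sum this ?_
        simp

/-- Failure of regularity / LICQ for the polynomial constraint: at every feasible point `B` of
the constraint `Tr((I + c·B∘B)^d) − d = 0`, the Fréchet derivative of the constraint function is
the zero linear functional, so no feasible point is regular. -/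
theorem poly_constraint_licq_fails
    (d : ℕ) (hd : 1 ≤ d) (c : ℝ) (hc : 0 < c) (B : Matrix (Fin d) (Fin d) ℝ)
    (hfeas : Matrix.trace ((1 + c • (B ⊙ B)) ^ d) = (d : ℝ)) :
    fderiv ℝ (fun A : Matrix (Fin d) (Fin d) ℝ =>
      Matrix.trace ((1 + c • (A ⊙ A)) ^ d) - (d : ℝ)) B = 0 := by
  have hmin : IsLocalMin (fun A : Matrix (Fin d) (Fin d) ℝ =>
      Matrix.trace ((1 + c • (A ⊙ A)) ^ d) - (d : ℝ)) B := by
    apply Filter.Eventually.of_forall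
    intro A
    have hA : ∀ i j, 0 ≤ (c • (A ⊙ A)) i j := by
      intro i j
      simp only [Matrix.smul_apply, Matrix.hadamard_apply, smul_eq_mul, ← sq]
      positivity
    have := trace_ge (c • (A ⊙ A)) hA
    simp only [hfeas]
    linarith
  exact hmin.fderiv_eq_zero
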